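/- Let T be a rooted ordered tree and number its vertices so that the vertex numbered k is the k-th visited vertex in Trav for which an even number of visits precede that visit. Then this numbering is a bijection from {1,...,n} to V(T), and for each k, dist_T(v_k, v_{k+1}) ≤ 3. -/

import Mathlib

/-- A finite rooted ordered tree: a root with an ordered list of subtrees. -/
inductive OTree : Type where
  | node : List OTree → OTree

mutual
/-- The visit sequence of the traversal `Trav` of the subtree rooted at the
vertex with address `a`; each vertex is visited exactly twice. -/
def trav : OTree → List ℕ → List (List ℕ)
  | .node [], a => [a, a]
  | .node (t :: ts), a => a :: (travList (t :: ts) a 0 ++ [a])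

def travList : List OTree → List ℕ → ℕ → List (List ℕ)
  | [], _, _ => []
  | t :: ts, a, i => trav t (a ++ [i]) ++ travList ts a (i + 1)
end

/-- Length of the longest common prefix of two addresses. -/
def lcp : List ℕ → List ℕ → ℕ
  | x :: xs, y :: ys => if x = y then lcp xs ys + 1 else 0
  | _, _ => 0

/-- Tree-distance between vertices identified by their addresses. -/
def addrDist (a b : List ℕ) : ℕ := (a.length - lcp a b) + (b.length - lcp a b)

/-- The elements at even positions of a list: these are the visits preceded by
an even number of visits. -/
def evens {α : Type*} : List α → List α
  | [] => []
  | [a] => [a]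
  | a :: _ :: rest => a :: evens rest

/-! ### evens lemmas -/

def oddsL {α : Type*} (l : List α) : List α := evens (l.drop 1)

theorem evens_cons {α : Type*} (a : α) (l : List α) :
    evens (a :: l) = a :: evens (l.drop 1) := by
  cases l <;> simp [evens]

theorem mem_of_mem_evens {α : Type*} {b : α} : ∀ {l : List α}, b ∈ evens l → b ∈ l
  | [], h => by simpa [evens] using h
  | [a], h => by simpa [evens] using h
  | a :: c :: rest, h => by
      simp only [evens, List.mem_cons] at h ⊢
      rcases h with h | h
      · exact Or.inl h
      · exact Or.inr (Or.inr (mem_of_mem_evens h))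

theorem evens_append_even {α : Type*} :
    ∀ (l₁ l₂ : List α), l₁.length % 2 = 0 → evens (l₁ ++ l₂) = evens l₁ ++ evens l₂
  | [], l₂, _ => by simp [evens]
  | [a], l₂, h => by simp at h
  | a :: c :: rest, l₂, h => by
      simp only [List.length_cons] at h
      simp only [List.cons_append, evens, List.append_eq]
      rw [evens_append_even rest l₂ (by omega)]

theorem evens_append_odd {α : Type*} :
    ∀ (l₁ l₂ : List α), l₁.length % 2 = 1 → evens (l₁ ++ l₂) = evens l₁ ++ evens (l₂.drop 1)
  | [], l₂, h => by simp at h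
  | [a], l₂, h => by simpa [evens] using evens_cons a l₂
  | a :: c :: rest, l₂, h => by
      simp only [List.length_cons] at h
      simp only [List.cons_append, evens, List.append_eq]
      rw [evens_append_odd rest l₂ (by omega)]

theorem oddsL_append_even {α : Type*} (l₁ l₂ : List α) (h : l₁.length % 2 = 0) :
    oddsL (l₁ ++ l₂) = oddsL l₁ ++ oddsL l₂ := by
  cases l₁ with
  | nil => simp [oddsL, evens]
  | cons a l₁' =>
      simp only [List.length_cons] at h
      simp only [oddsL, List.cons_append, List.drop_succ_cons, List.drop_zero]
      rw [evens_append_odd l₁' l₂ (by omega)]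

/-! ### addrDist lemmas -/

theorem lcp_append : ∀ (a x y : List ℕ), lcp (a ++ x) (a ++ y) = a.length + lcp x y
  | [], x, y => by simp
  | h :: a', x, y => by simp [lcp, lcp_append a' x y]; omega

theorem lcp_le_left : ∀ (x y : List ℕ), lcp x y ≤ x.length
  | [], y => by simp [lcp]
  | a :: x', [] => by simp [lcp]
  | a :: x', b :: y' => by
      simp only [lcp, List.length_cons]
      split <;> simp [lcp_le_left x' y'] <;> omega

theorem addrDist_append (a x y : List ℕ) :
    addrDist (a ++ x) (a ++ y) = addrDist x y := by
  simp only [addrDist, lcp_append, List.length_append]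
  omega

theorem dist_le3 (a : List ℕ) {x y : List ℕ} (h : addrDist x y ≤ 3) :
    addrDist (a ++ x) (a ++ y) ≤ 3 := by rw [addrDist_append]; exact h

theorem dist_single_single' {i j : ℕ} (h : i ≠ j) : addrDist [i] [j] = 2 := by
  simp [addrDist, lcp, h]

theorem dist_single_pair {i j k : ℕ} (h : i ≠ j) : addrDist [i] [j, k] = 3 := by
  simp [addrDist, lcp, h]

theorem dist_pair_single {i k j : ℕ} (h : i ≠ j) : addrDist [i, k] [j] = 3 := by
  simp [addrDist, lcp, h]

example (j : ℕ) : addrDist [] [j] = 1 := by simp [addrDist, lcp]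
example (j k : ℕ) : addrDist [] [j, k] = 2 := by simp [addrDist, lcp]
example (j : ℕ) : addrDist [j] [] = 1 := by simp [addrDist, lcp]
example (j k : ℕ) : addrDist [j, k] [] = 2 := by simp [addrDist, lcp]

/-! ### basic trav lemmas -/

mutual
theorem trav_length_even : ∀ (t : OTree) (a : List ℕ), (trav t a).length % 2 = 0
  | .node [], a => by simp [trav]
  | .node (t :: ts), a => by
      simp only [trav, List.length_cons, List.length_append, List.length_singleton, List.length_nil]
      have := travList_length_even (t :: ts) a 0
      omega

theorem travList_length_even : ∀ (ts : List OTree) (a : List ℕ) (i : ℕ),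
    (travList ts a i).length % 2 = 0
  | [], a, i => by simp [travList]
  | t :: ts, a, i => by
      simp only [travList, List.length_append]
      have h1 := trav_length_even t (a ++ [i])
      have h2 := travList_length_even ts a (i + 1)
      omega
end

mutual
theorem mem_trav_prefix : ∀ (t : OTree) (a : List ℕ) {b : List ℕ}, b ∈ trav t a → a <+: b
  | .node [], a, b, h => by
      simp [trav] at h
      rw [h]
  | .node (t :: ts), a, b, h => by
      simp only [trav, List.mem_cons, List.mem_append, List.mem_singleton] at h
      rcases h with rfl | h | rfl | h
      · exact List.prefix_refl _
      · obtain ⟨j, _, hj⟩ := mem_travList_prefix (t :: ts) a 0 h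
        exact (List.prefix_append a [j]).trans hj
      · exact List.prefix_refl _
      · exact absurd h List.not_mem_nil

theorem mem_travList_prefix : ∀ (ts : List OTree) (a : List ℕ) (i : ℕ) {b : List ℕ},
    b ∈ travList ts a i → ∃ j, i ≤ j ∧ (a ++ [j]) <+: b
  | [], a, i, b, h => by simp [travList] at h
  | t :: ts, a, i, b, h => by
      simp only [travList, List.mem_append] at h
      rcases h with h | h
      · exact ⟨i, le_refl i, mem_trav_prefix t (a ++ [i]) h⟩
      · obtain ⟨j, hj, hpre⟩ := mem_travList_prefix ts a (i + 1) h
        exact ⟨j, by omega, hpre⟩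
end

theorem prefix_index_eq {a : List ℕ} {i j : ℕ} {b : List ℕ}
    (h1 : (a ++ [i]) <+: b) (h2 : (a ++ [j]) <+: b) : i = j := by
  obtain ⟨s, hs⟩ := h1
  obtain ⟨s', hs'⟩ := h2
  rw [← hs'] at hs
  simp only [List.append_assoc] at hs
  have := List.append_cancel_left hs
  simp at this
  exact this.1

/-! ### the main mutual lemma -/

def Near (x y : List ℕ) : Prop := addrDist x y ≤ 3

theorem near_of (a : List ℕ) {x y : List ℕ} (h : addrDist x y ≤ 3) :
    Near (a ++ x) (a ++ y) := by
  unfold Near; rw [addrDist_append]; exact h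

mutual
theorem trav_good : ∀ (t : OTree) (a : List ℕ),
    (evens (trav t a)).Nodup ∧ (oddsL (trav t a)).Nodup ∧
    (∀ b, b ∈ evens (trav t a) ↔ b ∈ trav t a) ∧
    (∀ b, b ∈ oddsL (trav t a) ↔ b ∈ trav t a) ∧
    (evens (trav t a)).head? = some a ∧
    (∀ x, (evens (trav t a)).getLast? = some x → x = a ∨ ∃ j, x = a ++ [j]) ∧
    (∀ x, (oddsL (trav t a)).head? = some x → x = a ∨ x = a ++ [0]) ∧
    (oddsL (trav t a)).getLast? = some a ∧
    List.Chain' Near (evens (trav t a)) ∧ List.Chain' Near (oddsL (trav t a))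
  | .node [], a => by
      have h1 : trav (.node []) a = [a, a] := rfl
      have h2 : evens [a, a] = [a] := rfl
      have h3 : oddsL ([a, a] : List (List ℕ)) = [a] := rfl
      rw [h1, h2, h3]
      refine ⟨by simp, by simp, by simp, by simp, rfl, ?_, ?_, rfl, ?_, ?_⟩
      · intro x hx; simp at hx; exact Or.inl hx.symm
      · intro x hx; simp at hx; exact Or.inl hx.symm
      · exact List.isChain_singleton a
      · exact List.isChain_singleton a
  | .node (t :: ts), a => by
      set M := travList (t :: ts) a 0 with hM
      have hlen : M.length % 2 = 0 := travList_length_even (t :: ts) a 0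
      have e1 : trav (.node (t :: ts)) a = a :: (M ++ [a]) := rfl
      have hE : evens (a :: (M ++ [a])) = a :: oddsL M := by
        rw [evens_cons]
        have : evens ((M ++ [a]).drop 1) = oddsL (M ++ [a]) := rfl
        rw [this, oddsL_append_even M [a] hlen]
        have : oddsL ([a] : List (List ℕ)) = [] := rfl
        rw [this, List.append_nil]
      have hO : oddsL (a :: (M ++ [a])) = evens M ++ [a] := by
        have : oddsL (a :: (M ++ [a])) = evens (M ++ [a]) := rfl
        rw [this, evens_append_even M [a] hlen]
        rfl
      obtain ⟨nodE, nodO, memE, memO, headE, lastE, headO, lastO, chE, chO⟩ :=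
        travList_good (t :: ts) a 0
      have memM : ∀ b : List ℕ, b ∈ M → (a ++ [0]).length ≤ b.length := by
        intro b hb
        obtain ⟨j, _, hpre⟩ := mem_travList_prefix (t :: ts) a 0 hb
        have := hpre.length_le
        simpa using (by simpa using this : a.length + 1 ≤ b.length)
      have aniM : a ∉ M := by
        intro ha
        have := memM a ha
        simp at this
      rw [e1, hE, hO]
      refine ⟨?_, ?_, ?_, ?_, rfl, ?_, ?_, ?_, ?_, ?_⟩
      · -- Nodup (a :: oddsL M)
        refine List.nodup_cons.mpr ⟨fun ha => aniM ((memO a).mp ha), nodO⟩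
      · -- Nodup (evens M ++ [a])
        refine List.Nodup.append nodE (by simp) ?_
        intro x hx hx'
        simp at hx'
        subst hx'
        exact aniM ((memE x).mp hx)
      · intro b
        simp only [List.mem_cons, List.mem_append, List.mem_singleton, hM, List.not_mem_nil, or_false, memO b]
        tauto
      · intro b
        simp only [List.mem_cons, List.mem_append, List.mem_singleton, hM, List.not_mem_nil, or_false, memE b]
        tauto
      · -- getLast? (a :: oddsL M)
        intro x hx
        cases hOM : oddsL M with
        | nil => rw [hOM] at hx; simp at hx; exact Or.inl hx.symm
        | cons c l =>
            rw [hOM] at hx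
            rw [List.getLast?_cons_cons] at hx
            rw [← hOM] at hx
            obtain ⟨j, hj⟩ := lastO x hx
            exact Or.inr ⟨j, hj⟩
      · -- head? (evens M ++ [a])
        intro x hx
        rw [List.head?_append] at hx
        cases hEM : (evens M).head? with
        | none => rw [hEM] at hx; simp at hx; exact Or.inl hx.symm
        | some c =>
            rw [hEM] at hx
            simp at hx
            subst hx
            exact Or.inr (by simpa using headE c hEM)
      · -- getLast? (evens M ++ [a]) = some a
        rw [List.getLast?_append]; rfl
      · -- Chain' (a :: oddsL M)
        refine List.isChain_cons.mpr ⟨?_, chO⟩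
        intro y hy
        rcases headO y hy with rfl | rfl
        · simpa using near_of a (x := []) (y := [0]) (by decide)
        · simpa using near_of a (x := []) (y := [0, 0]) (by decide)
      · -- Chain' (evens M ++ [a])
        refine List.IsChain.append chE (List.isChain_singleton a) ?_
        intro x hx y hy
        simp at hy
        subst hy
        rcases lastE x hx with ⟨j, rfl⟩ | ⟨j, k, rfl⟩
        · simpa using near_of a (x := [j]) (y := []) (by simp [addrDist, lcp])
        · simpa using near_of a (x := [j, k]) (y := []) (by simp [addrDist, lcp])

theorem travList_good : ∀ (ts : List OTree) (a : List ℕ) (i : ℕ),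
    (evens (travList ts a i)).Nodup ∧ (oddsL (travList ts a i)).Nodup ∧
    (∀ b, b ∈ evens (travList ts a i) ↔ b ∈ travList ts a i) ∧
    (∀ b, b ∈ oddsL (travList ts a i) ↔ b ∈ travList ts a i) ∧
    (∀ x, (evens (travList ts a i)).head? = some x → x = a ++ [i]) ∧
    (∀ x, (evens (travList ts a i)).getLast? = some x →
        (∃ j, x = a ++ [j]) ∨ (∃ j k, x = a ++ [j, k])) ∧
    (∀ x, (oddsL (travList ts a i)).head? = some x → x = a ++ [i] ∨ x = a ++ [i, 0]) ∧
    (∀ x, (oddsL (travList ts a i)).getLast? = some x → ∃ j, x = a ++ [j]) ∧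
    List.Chain' Near (evens (travList ts a i)) ∧ List.Chain' Near (oddsL (travList ts a i))
  | [], a, i => by
      have h1 : travList [] a i = [] := rfl
      have h2 : evens ([] : List (List ℕ)) = [] := rfl
      have h3 : oddsL ([] : List (List ℕ)) = [] := rfl
      simp only [h1, h2, h3]
      simp
      exact List.isChain_nil
  | t :: ts, a, i => by
      have e1 : travList (t :: ts) a i = trav t (a ++ [i]) ++ travList ts a (i + 1) := rfl
      set T := trav t (a ++ [i]) with hT
      set M' := travList ts a (i + 1) with hM'
      have hlt : T.length % 2 = 0 := trav_length_even t (a ++ [i])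
      have hE : evens (T ++ M') = evens T ++ evens M' := evens_append_even T M' hlt
      have hO : oddsL (T ++ M') = oddsL T ++ oddsL M' := oddsL_append_even T M' hlt
      obtain ⟨nodE, nodO, memE, memO, headE, lastE, headO, lastO, chE, chO⟩ :=
        trav_good t (a ++ [i])
      obtain ⟨nodE', nodO', memE', memO', headE', lastE', headO', lastO', chE', chO'⟩ :=
        travList_good ts a (i + 1)
      have disj : ∀ b : List ℕ, b ∈ T → b ∈ M' → False := by
        intro b hb hb'
        have h1 : (a ++ [i]) <+: b := mem_trav_prefix t (a ++ [i]) hb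
        obtain ⟨j, hj, h2⟩ := mem_travList_prefix ts a (i + 1) hb'
        have := prefix_index_eq h1 h2
        omega
      rw [e1, hE, hO]
      refine ⟨?_, ?_, ?_, ?_, ?_, ?_, ?_, ?_, ?_, ?_⟩
      · exact List.Nodup.append nodE nodE'
          (fun b hb hb' => disj b ((memE b).mp hb) ((memE' b).mp hb'))
      · exact List.Nodup.append nodO nodO'
          (fun b hb hb' => disj b ((memO b).mp hb) ((memO' b).mp hb'))
      · intro b; simp only [List.mem_append, hT, hM', memE b, memE' b]
      · intro b; simp only [List.mem_append, hT, hM', memO b, memO' b]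
      · -- head of evens
        intro x hx
        rw [List.head?_append, headE] at hx
        simp at hx
        exact hx.symm
      · -- getLast of evens
        intro x hx
        rw [List.getLast?_append] at hx
        cases h' : (evens M').getLast? with
        | some y =>
            rw [h'] at hx
            simp at hx
            subst hx
            exact lastE' y h'
        | none =>
            rw [h'] at hx
            simp at hx
            rcases lastE x hx with rfl | ⟨k, rfl⟩
            · exact Or.inl ⟨i, rfl⟩
            · exact Or.inr ⟨i, k, by simp⟩
      · -- head of odds
        intro x hx
        have hne : (oddsL T).getLast? = some (a ++ [i]) := lastO
        have : oddsL T ≠ [] := by intro h; rw [h] at hne; simp at hne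
        obtain ⟨c, l, hcl⟩ := List.exists_cons_of_ne_nil this
        rw [List.head?_append, hcl] at hx
        simp at hx
        subst hx
        rcases headO c (by rw [hcl]; rfl) with rfl | rfl
        · exact Or.inl rfl
        · exact Or.inr (by simp)
      · -- getLast of odds
        intro x hx
        rw [List.getLast?_append] at hx
        cases h' : (oddsL M').getLast? with
        | some y =>
            rw [h'] at hx
            simp at hx
            subst hx
            exact lastO' y h'
        | none =>
            rw [h', Option.none_or, lastO] at hx
            simp at hx
            exact ⟨i, hx.symm⟩
      · -- Chain' evens
        refine List.IsChain.append chE chE' ?_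
        intro x hx y hy
        have hy' := headE' y hy
        subst hy'
        rcases lastE x hx with rfl | ⟨k, rfl⟩
        · exact near_of a (x := [i]) (y := [i + 1]) (by rw [dist_single_single' (by omega)]; omega)
        · have : a ++ [i] ++ [k] = a ++ [i, k] := by simp
          rw [this]
          exact near_of a (x := [i, k]) (y := [i + 1])
            (by rw [dist_pair_single (by omega)])
      · -- Chain' odds
        refine List.IsChain.append chO chO' ?_
        intro x hx y hy
        rw [lastO] at hx
        simp at hx
        subst hx
        rcases headO' y hy with rfl | rfl
        · exact near_of a (x := [i]) (y := [i + 1]) (by rw [dist_single_single' (by omega)]; omega)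
        · exact near_of a (x := [i]) (y := [i + 1, 0])
            (by rw [dist_single_pair (by omega)])
end


/-- The `Trav`-based numbering: the vertex numbered `k` is the `k`-th visited
vertex among the visits preceded by an even number of visits.  This numbering
is a bijection onto the vertex set (the listing `evens (trav t [])` has no
duplicates and contains exactly the vertices of the tree), and any two
consecutively numbered vertices are at tree-distance at most 3. -/
theorem trav_numbering (t : OTree) :
    (evens (trav t [])).Nodup ∧
    (∀ a : List ℕ, a ∈ evens (trav t []) ↔ a ∈ trav t []) ∧
    (∀ (k : ℕ) (h : k + 1 < (evens (trav t [])).length),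
        addrDist ((evens (trav t []))[k]'(Nat.lt_of_succ_lt h))
          ((evens (trav t []))[k + 1]'h) ≤ 3) := by
  obtain ⟨nodE, _, memE, _, _, _, _, _, chE, _⟩ := trav_good t []
  refine ⟨nodE, memE, ?_⟩
  intro k h
  have := List.isChain_iff_getElem.mp chE k (by omega)
  simpa [Near, List.get_eq_getElem] using this
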